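/- Let G = (V,E) be an undirected graph, k ≥ 3, and let L_i ⊆ V^* for i ∈ {0,...,k−3} be the language of words w = v_0...v_{t−1} with t ≥ i+2 in which v_i is adjacent to v_j for all j with i < j ≤ t−1, and let L_{k−2} be the language of words of length exactly k whose last two letters are adjacent in G. Then ⋂_{i=0}^{k−2} L_i is nonempty iff G has a k-clique. -/

import Mathlib

/-- The languages of the clique reduction.  For `i < k-2`, the `i`-th language
consists of the words `w = v₀…v_{t-1}` with `t ≥ i+2` in which `v_i` is
adjacent to `v_j` for every `j` with `i < j ≤ t-1`; the last language
(`i = k-2`) consists of the words of length exactly `k` whose last two letters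
are adjacent. -/
def cliqueLang {V : Type*} (G : SimpleGraph V) (k : ℕ) (i : Fin (k - 1)) :
    Set (List V) :=
  if i.val = k - 2 then
    {w | w.length = k ∧
      ∀ (h1 : k - 2 < w.length) (h2 : k - 1 < w.length),
        G.Adj (w.get ⟨k - 2, h1⟩) (w.get ⟨k - 1, h2⟩)}
  else
    {w | i.val + 2 ≤ w.length ∧
      ∀ (j : ℕ) (hi : i.val < w.length) (hj : j < w.length), i.val < j →
        G.Adj (w.get ⟨i.val, hi⟩) (w.get ⟨j, hj⟩)}

/-- The intersection of the languages `L₀, …, L_{k-2}` of the clique reduction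
is nonempty iff `G` has a `k`-clique. -/
theorem cliqueLang_intersection_nonempty_iff {V : Type*} (G : SimpleGraph V)
    (k : ℕ) (hk : 3 ≤ k) :
    (⋂ i : Fin (k - 1), cliqueLang G k i).Nonempty ↔
      ∃ s : Finset V, G.IsNClique k s := by
  classical
  constructor
  · rintro ⟨w, hw⟩
    simp only [Set.mem_iInter] at hw
    have hk2 : k - 2 < k - 1 := by omega
    have hlast := hw ⟨k - 2, hk2⟩
    rw [cliqueLang] at hlast
    simp only [if_pos rfl, Set.mem_setOf_eq] at hlast
    obtain ⟨hlen, hadj_last⟩ := hlast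
    have key : ∀ i j (hi : i < w.length) (hj : j < w.length), i < j →
        G.Adj (w.get ⟨i, hi⟩) (w.get ⟨j, hj⟩) := by
      intro i j hi hj hij
      by_cases hik : i = k - 2
      · have hjk : j = k - 1 := by omega
        subst hik; subst hjk
        exact hadj_last hi hj
      · have hik' : i < k - 2 := by omega
        have hmem := hw ⟨i, by omega⟩
        rw [cliqueLang] at hmem
        simp only [if_neg hik, Set.mem_setOf_eq] at hmem
        exact hmem.2 j hi hj hij
    have hnd : w.Nodup := by
      rw [List.nodup_iff_injective_get]
      intro a b hab
      by_contra hne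
      have hv : a.val ≠ b.val := fun h => hne (Fin.ext h)
      rcases lt_or_gt_of_ne hv with h | h
      · have := key a.val b.val a.isLt b.isLt h
        simp only [Fin.eta] at this
        rw [hab] at this
        exact G.irrefl this
      · have := key b.val a.val b.isLt a.isLt h
        simp only [Fin.eta] at this
        rw [hab] at this
        exact G.irrefl this
    refine ⟨w.toFinset, ?_, ?_⟩
    · intro a ha b hb hne
      simp only [Finset.mem_coe, List.mem_toFinset] at ha hb
      obtain ⟨ia, hia⟩ := List.mem_iff_get.mp ha
      obtain ⟨ib, hib⟩ := List.mem_iff_get.mp hb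
      subst hia; subst hib
      have hv : ia.val ≠ ib.val := fun h => hne (congrArg _ (Fin.ext h))
      rcases lt_or_gt_of_ne hv with h | h
      · have := key ia.val ib.val ia.isLt ib.isLt h
        simpa using this
      · have := (key ib.val ia.val ib.isLt ia.isLt h).symm
        simpa using this
    · rw [List.toFinset_card_of_nodup hnd, hlen]
  · rintro ⟨s, hclique, hcard⟩
    refine ⟨s.toList, ?_⟩
    have hlen : s.toList.length = k := by rw [Finset.length_toList, hcard]
    have hnd : s.toList.Nodup := Finset.nodup_toList s
    have hmem : ∀ (i : ℕ) (hi : i < s.toList.length), s.toList.get ⟨i, hi⟩ ∈ s := by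
      intro i hi
      rw [← Finset.mem_toList]
      exact List.get_mem _ _
    have hadj : ∀ (i j : ℕ) (hi : i < s.toList.length) (hj : j < s.toList.length),
        i ≠ j → G.Adj (s.toList.get ⟨i, hi⟩) (s.toList.get ⟨j, hj⟩) := by
      intro i j hi hj hij
      apply hclique (hmem i hi) (hmem j hj)
      intro h
      exact hij (congrArg Fin.val ((List.nodup_iff_injective_get.mp hnd) h))
    rw [Set.mem_iInter]
    intro i
    rw [cliqueLang]
    by_cases h : i.val = k - 2
    · simp only [if_pos h, Set.mem_setOf_eq]
      exact ⟨hlen, fun h1 h2 => hadj _ _ h1 h2 (by omega)⟩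
    · simp only [if_neg h, Set.mem_setOf_eq]
      have hlt : i.val < k - 2 := by have := i.isLt; omega
      exact ⟨by omega, fun j hi' hj hij => hadj _ _ hi' hj (by omega)⟩
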